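/- Every locally directed acyclic graph (LDAG) admits a topological sort: there is an ordering v_1, ..., v_n of the vertices and signs s_1, ..., s_n ∈ {+,−} such that for any i < j and any edge e between v_i and v_j, sgn(v_i, e) = s_i. -/

import Mathlib

/-- A locally directed graph: a multigraph without self-loops together with a sign
(`Bool`) for each incident vertex–edge pair. -/
structure LocalDigraph (V E : Type*) where
  fst : E → V
  snd : E → V
  ne : ∀ e, fst e ≠ snd e
  sgnFst : E → Bool
  sgnSnd : E → Bool

namespace LocalDigraph

variable {V E : Type*} [DecidableEq V]

/-- The sign of edge `e` at an incident vertex `x`. -/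
def sgn (G : LocalDigraph V E) (x : V) (e : E) : Bool :=
  if x = G.fst e then G.sgnFst e else G.sgnSnd e

/-- A locally directed closed walk of length `t`. -/
def IsClosedWalk (G : LocalDigraph V E) {t : ℕ} (v : ZMod t → V) (e : ZMod t → E) : Prop :=
  ∀ i : ZMod t,
    ((G.fst (e i) = v i ∧ G.snd (e i) = v (i + 1)) ∨
      (G.snd (e i) = v i ∧ G.fst (e i) = v (i + 1))) ∧
    G.sgn (v i) (e i) ≠ G.sgn (v i) (e (i - 1))

/-- A local digraph is acyclic (an LDAG) if it has no locally directed closed walk. -/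
def Acyclic (G : LocalDigraph V E) : Prop :=
  ¬ ∃ (t : ℕ) (_ : 0 < t) (v : ZMod t → V) (e : ZMod t → E), G.IsClosedWalk v e

/-- The step relation on the double cover `V × Bool`. -/
def Step (G : LocalDigraph V E) (u w : V × Bool) : Prop :=
  ∃ e : E, ((G.fst e = u.1 ∧ G.snd e = w.1) ∨ (G.snd e = u.1 ∧ G.fst e = w.1))
    ∧ G.sgn u.1 e = !u.2 ∧ G.sgn w.1 e = w.2

lemma no_cycle (G : LocalDigraph V E) (h : G.Acyclic) (u : V × Bool) :
    ¬ Relation.TransGen (G.Step) u u := by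
  intro hcyc
  obtain ⟨w, hw, hwu⟩ := Relation.TransGen.head'_iff.mp hcyc
  obtain ⟨l, hchain, hlast⟩ := List.exists_isChain_cons_of_relationReflTransGen hwu
  set L : List (V × Bool) := u :: w :: l with hL
  set t : ℕ := l.length + 1 with ht'
  have ht : 0 < t := Nat.succ_pos _
  have hLlen : L.length = t + 1 := by simp [hL, ht']
  set g : ℕ → V × Bool := fun n => L.getD n u with hgdef
  have hchain' : L.IsChain G.Step := List.IsChain.cons_cons hw hchain
  have hstep : ∀ n, n < t → G.Step (g n) (g (n + 1)) := by
    intro n hn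
    have h1 : n < L.length := by omega
    have h2 : n + 1 < L.length := by omega
    have := (List.isChain_iff_getElem.mp hchain') n (by omega)
    simpa [hgdef, List.getD_eq_get, h1, h2] using this
  have hg0 : g 0 = u := rfl
  have hgt : g t = u := by
    have h1 : t < L.length := by omega
    have h2 : L.getLast (by simp [hL]) = u := by
      show (u :: w :: l).getLast (by simp) = u
      rw [List.getLast_cons (List.cons_ne_nil _ _)]
      exact hlast
    have h3 : L.getLast (by simp [hL]) = L.get ⟨L.length - 1, by omega⟩ :=
      List.getLast_eq_getElem _
    have h4 : L.length - 1 = t := by omega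
    simp only [hgdef]
    rw [show L.getD t u = L.get ⟨t, h1⟩ from List.getD_eq_get _ _ ⟨t, h1⟩]
    rw [h3] at h2
    have h5 : (⟨t, h1⟩ : Fin L.length) = ⟨L.length - 1, by omega⟩ := by
      apply Fin.ext; simp; omega
    rw [h5]
    exact h2
  have hg : ∀ n, n < t → G.Step (g n) (g ((n + 1) % t)) := by
    intro n hn
    rcases Nat.lt_or_ge (n + 1) t with h1 | h1
    · rw [Nat.mod_eq_of_lt h1]; exact hstep n hn
    · have h2 : n + 1 = t := by omega
      rw [h2, Nat.mod_self, hg0, ← hgt, ← h2]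
      exact hstep n hn
  haveI : NeZero t := ⟨ht.ne'⟩
  have hval : ∀ i : ZMod t, (i + 1).val = (i.val + 1) % t := by
    intro i
    rw [ZMod.val_add, ZMod.val_one_eq_one_mod]
    conv_rhs => rw [Nat.add_mod]
    rw [Nat.mod_eq_of_lt (ZMod.val_lt i)]
  set vv : ZMod t → V := fun i => (g i.val).1 with hvv
  set ee : ZMod t → E := fun i => (hg i.val (ZMod.val_lt i)).choose with hee
  refine h ⟨t, ht, vv, ee, ?_⟩
  intro i
  obtain ⟨hend, hsgn1, hsgn2⟩ := (hg i.val (ZMod.val_lt i)).choose_spec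
  constructor
  · show (G.fst (ee i) = vv i ∧ G.snd (ee i) = vv (i + 1)) ∨
      (G.snd (ee i) = vv i ∧ G.fst (ee i) = vv (i + 1))
    simp only [hvv, hee]
    rw [hval i]
    exact hend
  · -- sign condition
    obtain ⟨hend', hsgn1', hsgn2'⟩ := (hg (i-1).val (ZMod.val_lt (i-1))).choose_spec
    have hiv : ((i - 1).val + 1) % t = i.val := by
      have := hval (i - 1)
      rw [sub_add_cancel] at this
      exact this.symm
    have key : ∀ c : E, G.sgn (g (((i - 1).val + 1) % t)).1 c = (g (((i - 1).val + 1) % t)).2 →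
        G.sgn (g i.val).1 c = (g i.val).2 := by
      rw [hiv]; exact fun c hc => hc
    have hsgn2'' := key _ hsgn2'
    show G.sgn (vv i) (ee i) ≠ G.sgn (vv i) (ee (i - 1))
    simp only [hvv, hee]
    rw [hsgn1, hsgn2'']
    simp

end LocalDigraph

/-- Every LDAG admits a topological sort: an ordering `v 0, …, v (n-1)` of the vertices
together with signs `s i` such that every edge between `v i` and `v j` with `i < j` has
sign `s i` at `v i`. -/
theorem stmt8 {V E : Type*} [DecidableEq V] [Fintype V] (G : LocalDigraph V E)
    (h : G.Acyclic) :
    ∃ (v : Fin (Fintype.card V) ≃ V) (s : Fin (Fintype.card V) → Bool),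
      ∀ i j : Fin (Fintype.card V), i < j → ∀ e : E,
        ({G.fst e, G.snd e} : Set V) = {v i, v j} → G.sgn (v i) e = s i := by
  classical
  -- partial order on the double cover
  set r : V × Bool → V × Bool → Prop :=
    fun u w => u = w ∨ Relation.TransGen G.Step u w with hr
  haveI : IsPartialOrder (V × Bool) r :=
    { refl := fun a => Or.inl rfl
      trans := by
        rintro a b c (rfl | hab) (rfl | hbc)
        · exact Or.inl rfl
        · exact Or.inr hbc
        · exact Or.inr hab
        · exact Or.inr (hab.trans hbc)
      antisymm := by
        rintro a b (rfl | hab) (h2 | hba)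
        · rfl
        · rfl
        · exact h2.symm
        · exact absurd (hab.trans hba) (G.no_cycle h a) }
  obtain ⟨le, hlin, hrle⟩ := extend_partialOrder r
  haveI : IsLinearOrder (V × Bool) le := hlin
  -- the earlier of the two copies of a vertex
  set m : V → V × Bool := fun x => if le (x, false) (x, true) then (x, false) else (x, true)
    with hm
  have hmfst : ∀ x, (m x).1 = x := by
    intro x; simp only [hm]; split <;> rfl
  have hmmin : ∀ x (d : Bool), le (m x) (x, d) := by
    intro x d
    simp only [hm]
    split
    · rename_i h1
      cases d
      · exact refl_of le _
      · exact h1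
    · rename_i h1
      cases d
      · rcases total_of le ((x, false) : V × Bool) (x, true) with h2 | h2
        · exact absurd h2 h1
        · exact h2
      · exact refl_of le _
  letI : LinearOrder V :=
    { le := fun x y => le (m x) (m y)
      le_refl := fun x => refl_of le _
      le_trans := fun x y z h1 h2 => trans_of le h1 h2
      le_antisymm := fun x y h1 h2 => by
        have := antisymm_of le h1 h2
        have := congrArg Prod.fst this
        rwa [hmfst, hmfst] at this
      le_total := fun x y => total_of le (m x) (m y)
      toDecidableLE := Classical.decRel _ }
  set v : Fin (Fintype.card V) ≃o V := monoEquivOfFin V rfl with hv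
  refine ⟨v.toEquiv, fun i => !(m (v i)).2, ?_⟩
  intro i j hij e hset
  replace hset : ({G.fst e, G.snd e} : Set V) = {v i, v j} := hset
  show G.sgn (v i) e = !(m (v i)).2
  set x := v i with hx
  set y := v j with hy
  have hxy : x ≠ y := by
    intro hxyeq
    exact absurd (v.toEquiv.injective hxyeq) hij.ne
  have hlt : le (m x) (m y) ∧ ¬ le (m y) (m x) := by
    have := v.lt_iff_lt.mpr hij
    rw [lt_iff_le_not_ge] at this
    exact this
  -- endpoints of e
  have hmemf : G.fst e ∈ ({x, y} : Set V) := by rw [← hset]; left; rfl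
  have hmems : G.snd e ∈ ({x, y} : Set V) := by rw [← hset]; right; rfl
  have hends : (G.fst e = x ∧ G.snd e = y) ∨ (G.fst e = y ∧ G.snd e = x) := by
    rcases hmemf with h1 | h1 <;> rcases hmems with h2 | h2
    · exact absurd (h1.trans h2.symm) (G.ne e)
    · exact Or.inl ⟨h1, h2⟩
    · exact Or.inr ⟨h1, h2⟩
    · exact absurd (h1.trans h2.symm) (G.ne e)
  by_contra hne
  have ha : G.sgn x e = (m x).2 := by
    revert hne
    cases hxe : G.sgn x e <;> cases hmx2 : (m x).2 <;> simp
  -- build a step from (y, !sgn y e) to (x, sgn x e) = m x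
  have hstep : G.Step (y, !(G.sgn y e)) (m x) := by
    refine ⟨e, ?_, ?_, ?_⟩
    · rw [hmfst]
      show (G.fst e = y ∧ G.snd e = x) ∨ (G.snd e = y ∧ G.fst e = x)
      rcases hends with ⟨h1, h2⟩ | ⟨h1, h2⟩
      · exact Or.inr ⟨h2, h1⟩
      · exact Or.inl ⟨h1, h2⟩
    · simp
    · rw [hmfst, ha]
  have hle1 : le (y, !(G.sgn y e)) (m x) := by
    rcases hrle _ _ (Or.inr (Relation.TransGen.single hstep)) with h1
    exact h1
  have : le (m y) (m x) := trans_of le (hmmin y _) hle1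
  exact hlt.2 this
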